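/- For the 'house chain' graph H_n (n ≥ 2), consisting of n inner faces as described (a fan-like partial Hamming graph with 2n+1 vertices whose quotients by Θ*-classes are complete graphs), the Gutman index satisfies Gut(H_n) = 6n³ + 9n² − 4n + 1. -/

import Mathlib

noncomputable section

/-- Vertex set of the house chain `Hₙ`: the apex `none = v₀` together with `uᵢ = (i, false)`
and `wᵢ = (i, true)` for `i = 1,…,n`; so `|V(Hₙ)| = 2n + 1`. -/
def HnV (n : ℕ) : Type := Option (Fin n × Bool)

instance (n : ℕ) : Fintype (HnV n) := by unfold HnV; infer_instance
instance (n : ℕ) : DecidableEq (HnV n) := by unfold HnV; infer_instance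

/-- The base relation generating the edges of `Hₙ`: the path `u₁ ⋯ uₙ`, the path `w₁ ⋯ wₙ`,
the rungs `uᵢwᵢ`, and the apex `v₀` adjacent to `u₁` and `w₁`; this gives the fan-like
partial Hamming graph with `n` inner faces. -/
def HnRel (n : ℕ) : HnV n → HnV n → Prop
  | none, some p => (p.1 : ℕ) = 0
  | some p, some q =>
      ((p.1 : ℕ) = (q.1 : ℕ) ∧ p.2 = false ∧ q.2 = true) ∨
      ((q.1 : ℕ) = (p.1 : ℕ) + 1 ∧ p.2 = q.2)
  | _, _ => False

/-- The house chain graph `Hₙ`, `n ≥ 2`. -/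
def Hn (n : ℕ) : SimpleGraph (HnV n) := SimpleGraph.fromRel (HnRel n)

/-- The degree of a vertex (as a real number). -/
noncomputable def SimpleGraph.degR {V : Type*} (G : SimpleGraph V) (u : V) : ℝ :=
  Nat.card {w : V | G.Adj u w}

/-- The Gutman index `Gut(G) = ∑_{{u,v}⊆V(G)} deg(u)deg(v) d(u,v)`. -/
noncomputable def SimpleGraph.gutmanIndex {V : Type*} [Fintype V] (G : SimpleGraph V) : ℝ :=
  (1 / 2) * ∑ u : V, ∑ v : V, (G.degR u * G.degR v) * (G.dist u v : ℝ)

namespace HnAux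

open SimpleGraph Finset

variable {n : ℕ}

attribute [reducible] HnV

attribute [instance] instFintypeHnV

/-- The claimed distance function on `Hₙ`. -/
def D : HnV n → HnV n → ℕ
  | none, none => 0
  | none, some p => (p.1 : ℕ) + 1
  | some p, none => (p.1 : ℕ) + 1
  | some p, some q => Nat.dist (p.1 : ℕ) (q.1 : ℕ) + (if p.2 = q.2 then 0 else 1)

lemma someHnV_inj {p q : Fin n × Bool} : @Eq (HnV n) (some p) (some q) ↔ p = q :=
  Option.some_inj

lemma noneHnV_ne (p : Fin n × Bool) : (none : HnV n) ≠ some p :=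
  fun h => Option.some_ne_none p h.symm

lemma D_self (x : HnV n) : D x x = 0 := by
  match x with
  | none => rfl
  | some ⟨i, b⟩ => simp [D, Nat.dist]

lemma D_eq_zero {x y : HnV n} (h : D x y = 0) : x = y := by
  match x, y with
  | none, none => rfl
  | none, some q => simp [D] at h
  | some p, none => simp [D] at h
  | some ⟨i, b⟩, some ⟨j, c⟩ =>
    simp only [D, Nat.dist] at h
    have h1 : i = j := Fin.ext (by omega)
    have h2 : b = c := by by_contra hbc; simp [hbc] at h
    rw [h1, h2]

lemma adj_D {x z : HnV n} (h : (Hn n).Adj x z) (y : HnV n) : D x y ≤ D z y + 1 := by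
  rw [Hn, SimpleGraph.fromRel_adj] at h
  have hrel : ∀ a b : HnV n, HnRel n a b →
      ((a = none ∧ ∃ p : Fin n × Bool, b = some p ∧ (p.1 : ℕ) = 0) ∨
       (∃ p q : Fin n × Bool, a = some p ∧ b = some q ∧
         (((p.1 : ℕ) = (q.1 : ℕ) ∧ p.2 ≠ q.2) ∨ ((q.1 : ℕ) = (p.1 : ℕ) + 1 ∧ p.2 = q.2)))) := by
    rintro (_ | p) (_ | q) hr
    · exact absurd hr (by simp [HnRel])
    · exact Or.inl ⟨rfl, q, rfl, hr⟩
    · exact absurd hr (by simp [HnRel])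
    · refine Or.inr ⟨p, q, rfl, rfl, ?_⟩
      rcases hr with ⟨h1, h2, h3⟩ | h1
      · exact Or.inl ⟨h1, by simp [h2, h3]⟩
      · exact Or.inr h1
  -- reduce to: an inequality about D for x,z with one of the explicit edge shapes
  have key : ∀ a b : HnV n,
      ((a = none ∧ ∃ p : Fin n × Bool, b = some p ∧ (p.1 : ℕ) = 0) ∨
       (∃ p q : Fin n × Bool, a = some p ∧ b = some q ∧
         (((p.1 : ℕ) = (q.1 : ℕ) ∧ p.2 ≠ q.2) ∨ ((q.1 : ℕ) = (p.1 : ℕ) + 1 ∧ p.2 = q.2)))) →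
      D a y ≤ D b y + 1 ∧ D b y ≤ D a y + 1 := by
    rintro a b (⟨rfl, ⟨j, c⟩, rfl, hj⟩ | ⟨⟨i, b'⟩, ⟨j, c⟩, rfl, rfl, hh⟩)
    · replace hj : (j : ℕ) = 0 := hj
      match y with
      | none => simp [D, hj]
      | some ⟨k, e⟩ =>
        show (k:ℕ)+1 ≤ (Nat.dist (j:ℕ) (k:ℕ) + if c = e then 0 else 1) + 1 ∧
          (Nat.dist (j:ℕ) (k:ℕ) + if c = e then 0 else 1) ≤ ((k:ℕ)+1) + 1
        simp only [Nat.dist]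
        constructor <;> (rcases eq_or_ne c e with h | h <;> simp [h] <;> omega)
    · replace hh : (((i:ℕ) = (j:ℕ) ∧ b' ≠ c) ∨ ((j:ℕ) = (i:ℕ) + 1 ∧ b' = c)) := hh
      match y with
      | none => show (i:ℕ)+1 ≤ ((j:ℕ)+1) + 1 ∧ (j:ℕ)+1 ≤ ((i:ℕ)+1) + 1; omega
      | some ⟨k, e⟩ =>
        show (Nat.dist (i:ℕ) (k:ℕ) + if b' = e then 0 else 1) ≤
            (Nat.dist (j:ℕ) (k:ℕ) + if c = e then 0 else 1) + 1 ∧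
          (Nat.dist (j:ℕ) (k:ℕ) + if c = e then 0 else 1) ≤
            (Nat.dist (i:ℕ) (k:ℕ) + if b' = e then 0 else 1) + 1
        simp only [Nat.dist]
        rcases hh with ⟨h1, h2⟩ | ⟨h1, h2⟩
        · have hbc : (if b' = e then 0 else 1) + (if c = e then 0 else 1) = 1 := by
            rcases eq_or_ne b' e with h | h <;> rcases eq_or_ne c e with h' | h' <;>
              simp_all <;> cases b' <;> cases c <;> cases e <;> simp_all
          constructor <;> omega
        · subst h2
          constructor <;> omega
  rcases h.2 with hr | hr
  · exact (key _ _ (hrel _ _ hr)).1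
  · exact (key _ _ (hrel _ _ hr)).2

lemma le_walk_length {x y : HnV n} (p : (Hn n).Walk x y) : D x y ≤ p.length := by
  induction p with
  | nil => simp [D_self]
  | @cons a b c h p ih =>
    have h1 := adj_D h c
    simp only [SimpleGraph.Walk.length_cons]
    omega



lemma exists_step {x y : HnV n} (h : x ≠ y) : ∃ z, (Hn n).Adj x z ∧ D z y + 1 = D x y := by
  have adj_iff : ∀ a b : HnV n, (Hn n).Adj a b ↔ a ≠ b ∧ (HnRel n a b ∨ HnRel n b a) :=
    fun a b => SimpleGraph.fromRel_adj _ a b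
  match x, y with
  | none, none => exact absurd rfl h
  | none, some ⟨j, c⟩ =>
    have hn0 : 0 < n := j.pos
    refine ⟨some (⟨0, hn0⟩, c), ?_, ?_⟩
    · rw [adj_iff]
      exact ⟨by simp, Or.inl rfl⟩
    · show (Nat.dist 0 (j : ℕ) + if c = c then 0 else 1) + 1 = (j : ℕ) + 1
      simp [Nat.dist]
  | some ⟨i, b⟩, none =>
    rcases Nat.eq_zero_or_pos (i : ℕ) with hi | hi
    · refine ⟨none, ?_, ?_⟩
      · rw [adj_iff]
        exact ⟨by simp, Or.inr hi⟩
      · show 0 + 1 = (i : ℕ) + 1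
        omega
    · refine ⟨some (⟨(i : ℕ) - 1, by omega⟩, b), ?_, ?_⟩
      · rw [adj_iff]
        refine ⟨by simp [someHnV_inj, Prod.mk.injEq, Fin.ext_iff]; omega,
          Or.inr (Or.inr ⟨show (i:ℕ) = (i:ℕ) - 1 + 1 by omega, rfl⟩)⟩
      · show ((i : ℕ) - 1) + 1 + 1 = (i : ℕ) + 1
        omega
  | some ⟨i, b⟩, some ⟨j, c⟩ =>
    rcases lt_trichotomy (i : ℕ) (j : ℕ) with hij | hij | hij
    · refine ⟨some (⟨(i : ℕ) + 1, lt_of_le_of_lt hij j.isLt⟩, b), ?_, ?_⟩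
      · rw [adj_iff]
        refine ⟨by simp [someHnV_inj, Prod.mk.injEq, Fin.ext_iff], Or.inl (Or.inr ⟨rfl, rfl⟩)⟩
      · show (Nat.dist ((i:ℕ)+1) (j:ℕ) + if b = c then 0 else 1) + 1
            = Nat.dist (i:ℕ) (j:ℕ) + if b = c then 0 else 1
        simp only [Nat.dist]; omega
    · -- same column, so b ≠ c, and y is adjacent to x
      have hbc : b ≠ c := by
        intro hbc
        exact h (by rw [hbc, Fin.ext (hij : (i:ℕ) = (j:ℕ))])
      refine ⟨some (j, c), ?_, ?_⟩
      · rw [adj_iff]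
        refine ⟨h, ?_⟩
        rcases b with _ | _ <;> rcases c with _ | _
        · exact absurd rfl hbc
        · exact Or.inl (Or.inl ⟨hij, rfl, rfl⟩)
        · exact Or.inr (Or.inl ⟨hij.symm, rfl, rfl⟩)
        · exact absurd rfl hbc
      · show (Nat.dist (j:ℕ) (j:ℕ) + if c = c then 0 else 1) + 1
            = Nat.dist (i:ℕ) (j:ℕ) + if b = c then 0 else 1
        simp [Nat.dist, hbc, hij]
    · refine ⟨some (⟨(i : ℕ) - 1, by omega⟩, b), ?_, ?_⟩
      · rw [adj_iff]
        refine ⟨by simp [someHnV_inj, Prod.mk.injEq, Fin.ext_iff]; omega,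
          Or.inr (Or.inr ⟨show (i:ℕ) = (i:ℕ) - 1 + 1 by omega, rfl⟩)⟩
      · show (Nat.dist ((i:ℕ)-1) (j:ℕ) + if b = c then 0 else 1) + 1
            = Nat.dist (i:ℕ) (j:ℕ) + if b = c then 0 else 1
        simp only [Nat.dist]; omega

lemma dist_eq (x y : HnV n) : (Hn n).dist x y = D x y := by
  have upper : ∀ (k : ℕ) (x y : HnV n), D x y = k → ∃ p : (Hn n).Walk x y, p.length = k := by
    intro k
    induction k with
    | zero => intro x y h; obtain rfl := D_eq_zero h; exact ⟨.nil, rfl⟩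
    | succ k ih =>
      intro x y h
      have hne : x ≠ y := by rintro rfl; rw [D_self] at h; omega
      obtain ⟨z, hadj, hz⟩ := exists_step hne
      obtain ⟨p, hp⟩ := ih z y (by omega)
      exact ⟨.cons hadj p, by simp [hp]⟩
  obtain ⟨p, hp⟩ := upper (D x y) x y rfl
  refine le_antisymm (hp ▸ SimpleGraph.dist_le p) ?_
  obtain ⟨q, hq⟩ := SimpleGraph.Reachable.exists_walk_length_eq_dist ⟨p⟩
  calc D x y ≤ q.length := le_walk_length q
    _ = _ := hq


lemma adj_none_some {j : Fin n} {c : Bool} :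
    (Hn n).Adj none (some (j, c)) ↔ (j : ℕ) = 0 := by
  rw [Hn, SimpleGraph.fromRel_adj]
  constructor
  · rintro ⟨hne, h | h⟩
    · exact h
    · exact absurd h (by simp [HnRel])
  · intro h
    exact ⟨noneHnV_ne _, Or.inl h⟩

lemma adj_some_some {i j : Fin n} {b c : Bool} :
    (Hn n).Adj (some (i, b)) (some (j, c)) ↔
      (((i : ℕ) = (j : ℕ) ∧ b ≠ c) ∨ ((j : ℕ) = (i : ℕ) + 1 ∧ b = c) ∨
        ((i : ℕ) = (j : ℕ) + 1 ∧ b = c)) := by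
  rw [Hn, SimpleGraph.fromRel_adj]
  constructor
  · rintro ⟨hne, (⟨h1, h2, h3⟩ | ⟨h1, h2⟩) | (⟨h1, h2, h3⟩ | ⟨h1, h2⟩)⟩
    · exact Or.inl ⟨h1, by simp only [] at h2 h3; simp [h2, h3]⟩
    · exact Or.inr (Or.inl ⟨h1, h2⟩)
    · exact Or.inl ⟨h1.symm, by simp only [] at h2 h3; simp [h2, h3]⟩
    · exact Or.inr (Or.inr ⟨h1, h2.symm⟩)
  · rintro (⟨h1, h2⟩ | ⟨h1, h2⟩ | ⟨h1, h2⟩)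
    · refine ⟨by simp [someHnV_inj, Prod.mk.injEq]; intro _; exact h2, ?_⟩
      rcases b with _ | _ <;> rcases c with _ | _
      · exact absurd rfl h2
      · exact Or.inl (Or.inl ⟨h1, rfl, rfl⟩)
      · exact Or.inr (Or.inl ⟨h1.symm, rfl, rfl⟩)
      · exact absurd rfl h2
    · exact ⟨by simp [someHnV_inj, Prod.mk.injEq, Fin.ext_iff]; omega,
        Or.inl (Or.inr ⟨h1, h2⟩)⟩
    · exact ⟨by simp [someHnV_inj, Prod.mk.injEq, Fin.ext_iff]; omega,
        Or.inr (Or.inr ⟨h1, h2.symm⟩)⟩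

lemma adj_some_none {i : Fin n} {b : Bool} :
    (Hn n).Adj (some (i, b)) none ↔ (i : ℕ) = 0 := by
  rw [SimpleGraph.adj_comm]; exact adj_none_some

lemma not_adj_none_none : ¬ (Hn n).Adj none none := SimpleGraph.irrefl _


lemma degR_none (hn : 0 < n) : (Hn n).degR (none : HnV n) = 2 := by
  have hset : {w : HnV n | (Hn n).Adj none w} =
      {some (⟨0, hn⟩, false), some (⟨0, hn⟩, true)} := by
    ext w
    match w with
    | none =>
      simp only [Set.mem_setOf_eq, not_adj_none_none, Set.mem_insert_iff,
        Set.mem_singleton_iff, false_iff]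
      push_neg
      exact ⟨noneHnV_ne _, noneHnV_ne _⟩
    | some ⟨j, c⟩ =>
      simp only [Set.mem_setOf_eq, adj_none_some, Set.mem_insert_iff,
        Set.mem_singleton_iff, someHnV_inj, Prod.mk.injEq, Fin.ext_iff, Fin.val_mk]
      constructor
      · intro h
        rcases c with _ | _
        · exact Or.inl ⟨h, rfl⟩
        · exact Or.inr ⟨h, rfl⟩
      · rintro (⟨h, _⟩ | ⟨h, _⟩) <;> exact h
  rw [SimpleGraph.degR, hset, Nat.card_coe_set_eq,
    Set.ncard_pair (by simp [someHnV_inj, Prod.mk.injEq])]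
  norm_num

lemma degR_some (hn : 2 ≤ n) (i : Fin n) (b : Bool) :
    (Hn n).degR (some (i, b)) = if (i : ℕ) + 1 < n then 3 else 2 := by
  have hin : (i : ℕ) < n := i.isLt
  by_cases h1 : (i : ℕ) + 1 < n
  · rw [if_pos h1]
    rcases Nat.eq_zero_or_pos (i : ℕ) with h0 | h0
    · -- first column
      have hset : {w : HnV n | (Hn n).Adj (some (i, b)) w} =
          {none, some (⟨1, h1.trans_le' (by omega)⟩, b), some (i, !b)} := by
        ext w
        match w with
        | none => simp [adj_some_none, h0, noneHnV_ne]
        | some ⟨j, c⟩ =>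
          simp only [Set.mem_setOf_eq, adj_some_some, Set.mem_insert_iff,
            Set.mem_singleton_iff, someHnV_inj, Prod.mk.injEq, Fin.ext_iff, Fin.val_mk]
          have hnn : @Eq (HnV n) (some (j, c)) none ↔ False :=
            iff_false_intro (fun h => noneHnV_ne (j, c) h.symm)
          rw [hnn]
          rcases b with _ | _ <;> rcases c with _ | _ <;> simp <;> omega
      rw [SimpleGraph.degR, hset, Nat.card_coe_set_eq]
      rw [Set.ncard_insert_of_notMem (by
        simp only [Set.mem_insert_iff, Set.mem_singleton_iff]
        push_neg
        exact ⟨(noneHnV_ne _), (noneHnV_ne _)⟩)]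
      rw [Set.ncard_pair (by simp [someHnV_inj, Prod.mk.injEq, Fin.ext_iff] <;> omega)]
      norm_num
    · -- middle column
      have hset : {w : HnV n | (Hn n).Adj (some (i, b)) w} =
          {some (⟨(i : ℕ) - 1, by omega⟩, b), some (⟨(i : ℕ) + 1, h1⟩, b), some (i, !b)} := by
        ext w
        match w with
        | none =>
          simp only [Set.mem_setOf_eq, adj_some_none, Set.mem_insert_iff,
            Set.mem_singleton_iff]
          constructor
          · omega
          · rintro (h | h | h) <;> exact absurd h (noneHnV_ne _)
        | some ⟨j, c⟩ =>
          simp only [Set.mem_setOf_eq, adj_some_some, Set.mem_insert_iff,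
            Set.mem_singleton_iff, someHnV_inj, Prod.mk.injEq, Fin.ext_iff, Fin.val_mk]
          rcases b with _ | _ <;> rcases c with _ | _ <;> simp <;> omega
      rw [SimpleGraph.degR, hset, Nat.card_coe_set_eq]
      rw [Set.ncard_insert_of_notMem (by
        simp [someHnV_inj, Prod.mk.injEq, Fin.ext_iff] <;> omega)]
      rw [Set.ncard_pair (by simp [someHnV_inj, Prod.mk.injEq, Fin.ext_iff] <;> omega)]
      norm_num
  · -- last column
    rw [if_neg h1]
    have hlast : (i : ℕ) + 1 = n := by omega
    have h0 : 0 < (i : ℕ) := by omega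
    have hset : {w : HnV n | (Hn n).Adj (some (i, b)) w} =
        {some (⟨(i : ℕ) - 1, by omega⟩, b), some (i, !b)} := by
      ext w
      match w with
      | none =>
        simp only [Set.mem_setOf_eq, adj_some_none, Set.mem_insert_iff,
          Set.mem_singleton_iff]
        constructor
        · omega
        · rintro (h | h) <;> exact absurd h (noneHnV_ne _)
      | some ⟨j, c⟩ =>
        have hjn : (j : ℕ) < n := j.isLt
        simp only [Set.mem_setOf_eq, adj_some_some, Set.mem_insert_iff,
          Set.mem_singleton_iff, someHnV_inj, Prod.mk.injEq, Fin.ext_iff, Fin.val_mk]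
        rcases b with _ | _ <;> rcases c with _ | _ <;> simp <;> omega
    rw [SimpleGraph.degR, hset, Nat.card_coe_set_eq]
    rw [Set.ncard_pair (by simp [someHnV_inj, Prod.mk.injEq, Fin.ext_iff] <;> omega)]
    norm_num


@[simp] lemma D_none_none : D (none : HnV n) none = 0 := rfl
@[simp] lemma D_none_some (p : Fin n × Bool) : D none (some p) = (p.1 : ℕ) + 1 := rfl
@[simp] lemma D_some_none (p : Fin n × Bool) : D (some p) none = (p.1 : ℕ) + 1 := rfl
@[simp] lemma D_some_some (p q : Fin n × Bool) :
    D (some p) (some q) = Nat.dist (p.1 : ℕ) (q.1 : ℕ) + if p.2 = q.2 then 0 else 1 := rfl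

lemma sum_HnV (g : HnV n → ℝ) :
    ∑ x : HnV n, g x = g none + ∑ i : Fin n, (g (some (i, false)) + g (some (i, true))) := by
  rw [show (∑ x : HnV n, g x) = ∑ x : Option (Fin n × Bool), g x from rfl]
  rw [Fintype.sum_option]
  congr 1
  rw [Fintype.sum_prod_type]
  refine Finset.sum_congr rfl fun i _ => ?_
  rw [Fintype.sum_bool]
  ring

/-! ### Range sum helpers -/

lemma sum_cast_id (m : ℕ) : ∑ i ∈ Finset.range m, (i : ℝ) = m * (m - 1) / 2 := by
  induction m with
  | zero => simp
  | succ k ih =>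
    rw [Finset.sum_range_succ, ih]
    push_cast
    ring

lemma sum_dist_right (m : ℕ) : ∑ j ∈ Finset.range m, (Nat.dist m j : ℝ) = m * (m + 1) / 2 := by
  have h : ∀ j ∈ Finset.range m, (Nat.dist m j : ℝ) = (m : ℝ) - j := by
    intro j hj
    rw [Finset.mem_range] at hj
    have : Nat.dist m j = m - j := by simp [Nat.dist]; omega
    rw [this, Nat.cast_sub hj.le]
  rw [Finset.sum_congr rfl h, Finset.sum_sub_distrib, Finset.sum_const, sum_cast_id]
  simp only [Finset.card_range, nsmul_eq_mul]
  ring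

lemma sum_dist_last (m : ℕ) : ∑ j ∈ Finset.range m, (Nat.dist (m - 1) j : ℝ) = m * (m - 1) / 2 := by
  rcases Nat.eq_zero_or_pos m with rfl | hm
  · simp
  have h : ∀ j ∈ Finset.range m, (Nat.dist (m - 1) j : ℝ) = |((m : ℝ) - 1) - j| := by
    intro j hj
    rw [Finset.mem_range] at hj
    have hd : Nat.dist (m - 1) j = if j ≤ m - 1 then m - 1 - j else j - (m - 1) := by
      simp only [Nat.dist]; split <;> omega
    rcases le_or_gt j (m - 1) with hle | hlt
    · rw [hd, if_pos hle, Nat.cast_sub hle, Nat.cast_sub (by omega : 1 ≤ m)]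
      rw [abs_of_nonneg]
      · push_cast; ring
      · have : (j : ℝ) ≤ (m : ℝ) - 1 := by
          have := Nat.cast_le (α := ℝ).mpr hle
          rw [Nat.cast_sub (by omega : 1 ≤ m)] at this
          simpa using this
        linarith
    · omega
  rw [Finset.sum_congr rfl h]
  have h2 : ∀ j ∈ Finset.range m, |((m : ℝ) - 1) - j| = ((m : ℝ) - 1) - j := by
    intro j hj
    rw [Finset.mem_range] at hj
    rw [abs_of_nonneg]
    have : (j : ℝ) ≤ (m : ℝ) - 1 := by
      have := Nat.cast_le (α := ℝ).mpr (by omega : j ≤ m - 1)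
      rw [Nat.cast_sub (by omega : 1 ≤ m)] at this
      simpa using this
    linarith
  rw [Finset.sum_congr rfl h2, Finset.sum_sub_distrib, Finset.sum_const, sum_cast_id]
  simp only [Finset.card_range, nsmul_eq_mul]
  ring

lemma sum_sum_dist (m : ℕ) :
    ∑ i ∈ Finset.range m, ∑ j ∈ Finset.range m, (Nat.dist i j : ℝ) = m * (m ^ 2 - 1) / 3 := by
  induction m with
  | zero => simp
  | succ k ih =>
    have hstep : ∀ i ∈ Finset.range k, (Nat.dist i k : ℝ) = (Nat.dist k i : ℝ) := by
      intro i _; rw [Nat.dist_comm]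
    rw [Finset.sum_range_succ]
    have inner : ∀ i ∈ Finset.range k,
        ∑ j ∈ Finset.range (k + 1), (Nat.dist i j : ℝ)
          = (∑ j ∈ Finset.range k, (Nat.dist i j : ℝ)) + (Nat.dist i k : ℝ) := by
      intro i _; rw [Finset.sum_range_succ]
    rw [Finset.sum_congr rfl inner, Finset.sum_add_distrib, ih,
      Finset.sum_congr rfl hstep, sum_dist_right, Finset.sum_range_succ, sum_dist_right]
    simp [Nat.dist]
    push_cast
    ring


/-- The degree weight: `3` except for the last column. -/
def Fdeg (n i : ℕ) : ℝ := if i + 1 < n then 3 else 2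

lemma degR_some' (hn : 2 ≤ n) (i : Fin n) (b : Bool) :
    (Hn n).degR (some (i, b)) = Fdeg n (i : ℕ) := degR_some hn i b

lemma F_eq (i : ℕ) (hi : i ∈ Finset.range n) :
    Fdeg n i = 3 - (if i = n - 1 then (1 : ℝ) else 0) := by
  rw [Finset.mem_range] at hi
  rw [Fdeg]
  split_ifs with h1 h2
  · exfalso; omega
  · norm_num
  · norm_num
  · exfalso; omega

lemma sumF_mul (hn : 1 ≤ n) (g : ℕ → ℝ) :
    ∑ i ∈ Finset.range n, Fdeg n i * g i
      = 3 * (∑ i ∈ Finset.range n, g i) - g (n - 1) := by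
  have h : ∀ i ∈ Finset.range n, Fdeg n i * g i
      = 3 * g i - (if i = n - 1 then g i else 0) := by
    intro i hi
    rw [F_eq i hi]
    split_ifs <;> ring
  rw [Finset.sum_congr rfl h, Finset.sum_sub_distrib, ← Finset.mul_sum,
    Finset.sum_ite_eq' (Finset.range n) (n - 1) g, if_pos (Finset.mem_range.mpr (by omega))]

lemma sumF (hn : 1 ≤ n) : ∑ i ∈ Finset.range n, Fdeg n i = 3 * (n : ℝ) - 1 := by
  have := sumF_mul hn (fun _ => (1 : ℝ))
  simp only [mul_one] at this
  rw [this]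
  simp

lemma sumFi (hn : 1 ≤ n) :
    ∑ i ∈ Finset.range n, Fdeg n i * ((i : ℝ) + 1) = 3 * n * (n + 1) / 2 - n := by
  rw [sumF_mul hn (fun i => (i : ℝ) + 1), Finset.sum_add_distrib, sum_cast_id,
    Finset.sum_const, Finset.card_range, nsmul_eq_mul, mul_one,
    Nat.cast_sub (by omega : 1 ≤ n)]
  push_cast
  ring

lemma sumFF (hn : 1 ≤ n) :
    ∑ i ∈ Finset.range n, ∑ j ∈ Finset.range n, Fdeg n i * Fdeg n j = (3 * (n : ℝ) - 1) ^ 2 := by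
  have h : ∀ i ∈ Finset.range n, ∑ j ∈ Finset.range n, Fdeg n i * Fdeg n j
      = Fdeg n i * (3 * (n : ℝ) - 1) := by
    intro i _
    rw [← Finset.mul_sum, sumF hn]
  rw [Finset.sum_congr rfl h, ← Finset.sum_mul, sumF hn]
  ring

lemma sumFFdist (hn : 1 ≤ n) :
    ∑ i ∈ Finset.range n, ∑ j ∈ Finset.range n,
        Fdeg n i * Fdeg n j * (Nat.dist i j : ℝ)
      = 3 * (n : ℝ) ^ 2 * (n - 1) := by
  have hL : ∑ j ∈ Finset.range n, (Nat.dist (n - 1) j : ℝ) = n * ((n : ℝ) - 1) / 2 :=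
    sum_dist_last n
  have inner : ∀ i ∈ Finset.range n,
      ∑ j ∈ Finset.range n, Fdeg n i * Fdeg n j * (Nat.dist i j : ℝ)
        = Fdeg n i * (3 * (∑ j ∈ Finset.range n, (Nat.dist i j : ℝ)) - (Nat.dist i (n - 1) : ℝ)) := by
    intro i _
    have h1 : ∀ j ∈ Finset.range n, Fdeg n i * Fdeg n j * (Nat.dist i j : ℝ)
        = Fdeg n i * (Fdeg n j * (Nat.dist i j : ℝ)) := fun j _ => by ring
    rw [Finset.sum_congr rfl h1, ← Finset.mul_sum,
      sumF_mul hn (fun j => (Nat.dist i j : ℝ))]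
  rw [Finset.sum_congr rfl inner,
    sumF_mul hn (fun i => 3 * (∑ j ∈ Finset.range n, (Nat.dist i j : ℝ)) - (Nat.dist i (n - 1) : ℝ))]
  have hswap : ∑ i ∈ Finset.range n, (Nat.dist i (n - 1) : ℝ)
      = ∑ i ∈ Finset.range n, (Nat.dist (n - 1) i : ℝ) := by
    exact Finset.sum_congr rfl fun i _ => by rw [Nat.dist_comm]
  rw [Finset.sum_sub_distrib, ← Finset.mul_sum, sum_sum_dist, hswap, hL, Nat.dist_self]
  push_cast
  ring


lemma main_sum (hn : 2 ≤ n) :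
    ∑ u : HnV n, ∑ v : HnV n, ((Hn n).degR u * (Hn n).degR v) * ((Hn n).dist u v : ℝ)
      = 12 * (n : ℝ) ^ 3 + 18 * (n : ℝ) ^ 2 - 8 * (n : ℝ) + 2 := by
  have h1 : 0 < n := by omega
  simp only [sum_HnV, dist_eq, degR_none h1, degR_some' hn,
    D_none_none, D_none_some, D_some_none, D_some_some, Nat.dist_self]
  norm_num
  have hn' : 1 ≤ n := by omega
  have key : ∑ x ∈ Finset.range n, (2 * Fdeg n x * ((x : ℝ) + 1) + 2 * Fdeg n x * ((x : ℝ) + 1))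
      + ∑ x ∈ Finset.range n,
        (Fdeg n x * 2 * ((x : ℝ) + 1) +
            ∑ j ∈ Finset.range n, (Fdeg n x * Fdeg n j * (Nat.dist x j : ℝ) +
                Fdeg n x * Fdeg n j * ((Nat.dist x j : ℝ) + 1)) +
          (Fdeg n x * 2 * ((x : ℝ) + 1) +
            ∑ j ∈ Finset.range n, (Fdeg n x * Fdeg n j * ((Nat.dist x j : ℝ) + 1) +
                Fdeg n x * Fdeg n j * (Nat.dist x j : ℝ))))
      = 12 * (n : ℝ) ^ 3 + 18 * (n : ℝ) ^ 2 - 8 * (n : ℝ) + 2 := ?_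
  case _ =>
    refine Eq.trans ?_ key
    congr 1
    · rw [← Fin.sum_univ_eq_sum_range]
    · rw [← Fin.sum_univ_eq_sum_range]
      refine Finset.sum_congr rfl fun x _ => ?_
      rw [← Fin.sum_univ_eq_sum_range, ← Fin.sum_univ_eq_sum_range]
  have hfst : ∀ x ∈ Finset.range n,
      2 * Fdeg n x * ((x : ℝ) + 1) + 2 * Fdeg n x * ((x : ℝ) + 1)
        = 4 * (Fdeg n x * ((x : ℝ) + 1)) := fun x _ => by ring
  have hbody : ∀ x ∈ Finset.range n,
      (Fdeg n x * 2 * ((x : ℝ) + 1) +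
          ∑ j ∈ Finset.range n, (Fdeg n x * Fdeg n j * (Nat.dist x j : ℝ) +
              Fdeg n x * Fdeg n j * ((Nat.dist x j : ℝ) + 1)) +
        (Fdeg n x * 2 * ((x : ℝ) + 1) +
          ∑ j ∈ Finset.range n, (Fdeg n x * Fdeg n j * ((Nat.dist x j : ℝ) + 1) +
              Fdeg n x * Fdeg n j * (Nat.dist x j : ℝ))))
      = 4 * (Fdeg n x * ((x : ℝ) + 1))
        + (4 * (∑ j ∈ Finset.range n, Fdeg n x * Fdeg n j * (Nat.dist x j : ℝ))
        + 2 * (∑ j ∈ Finset.range n, Fdeg n x * Fdeg n j)) := by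
    intro x _
    have i1 : ∀ j ∈ Finset.range n, Fdeg n x * Fdeg n j * (Nat.dist x j : ℝ) +
          Fdeg n x * Fdeg n j * ((Nat.dist x j : ℝ) + 1)
        = 2 * (Fdeg n x * Fdeg n j * (Nat.dist x j : ℝ)) + Fdeg n x * Fdeg n j :=
      fun j _ => by ring
    have i2 : ∀ j ∈ Finset.range n, Fdeg n x * Fdeg n j * ((Nat.dist x j : ℝ) + 1) +
          Fdeg n x * Fdeg n j * (Nat.dist x j : ℝ)
        = 2 * (Fdeg n x * Fdeg n j * (Nat.dist x j : ℝ)) + Fdeg n x * Fdeg n j :=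
      fun j _ => by ring
    rw [Finset.sum_congr rfl i1, Finset.sum_congr rfl i2, Finset.sum_add_distrib,
      ← Finset.mul_sum]
    ring
  rw [Finset.sum_congr rfl hfst, Finset.sum_congr rfl hbody, Finset.sum_add_distrib,
    Finset.sum_add_distrib, ← Finset.mul_sum, ← Finset.mul_sum, ← Finset.mul_sum,
    sumFi hn', sumFFdist hn', sumFF hn']
  ring

end HnAux

/-- For the house chain `Hₙ` (`n ≥ 2`),
`Gut(Hₙ) = 6n³ + 9n² − 4n + 1`. -/
theorem gutmanIndex_Hn (n : ℕ) (hn : 2 ≤ n) :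
    (Hn n).gutmanIndex = 6 * (n : ℝ) ^ 3 + 9 * (n : ℝ) ^ 2 - 4 * (n : ℝ) + 1 := by
  rw [SimpleGraph.gutmanIndex, HnAux.main_sum hn]
  ring

end
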